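/- Suppose the symmetric 3-tensor T satisfies condition (Γ). Then for all u₁, u₂, u₃ ∈ ℝ^p it holds |∑_{i,j,k=1}^p T_{i,j,k} (u₁)_i (u₂)_j (u₃)_k| ≤ τ ‖Γu₁‖ ‖Γu₂‖ ‖Γu₃‖. -/

import Mathlib

open Matrix Finset

/-- Euclidean norm on `ℝ^p`. -/
noncomputable def euclNorm {p : ℕ} (v : Fin p → ℝ) : ℝ := Real.sqrt (∑ i, v i ^ 2)


private lemma lin_zero {K d : ℝ} (hK : 0 ≤ K) (h : ∀ t : ℝ, 1 ≤ t → |d| * t ≤ K) :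
    d = 0 := by
  by_contra hd
  have hd' : 0 < |d| := abs_pos.mpr hd
  have h1 : (1:ℝ) ≤ K / |d| + 1 := by
    have : 0 ≤ K / |d| := div_nonneg hK hd'.le
    linarith
  have h2 := h (K / |d| + 1) h1
  have h3 : |d| * (K / |d| + 1) = K + |d| := by field_simp
  rw [h3] at h2
  linarith

private lemma cubic_zero {a b c M : ℝ} (h : ∀ t : ℝ, |a*t + b*t^2 + c*t^3| ≤ M) :
    a = 0 ∧ b = 0 ∧ c = 0 := by
  have hM : 0 ≤ M := by have h0 := h 0; simp at h0; linarith [abs_nonneg (a*0 + b*0^2 + c*0^3)]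
  have hb : b = 0 := by
    refine lin_zero hM fun t ht => ?_
    have h1 := h t
    have h2 := h (-t)
    have habs : |b * t^2| ≤ M := by
      have heq : b*t^2 = ((a*t + b*t^2 + c*t^3) + (a*(-t) + b*(-t)^2 + c*(-t)^3))/2 := by ring
      rw [heq]
      have := abs_add_le (a*t + b*t^2 + c*t^3) (a*(-t) + b*(-t)^2 + c*(-t)^3)
      rw [abs_div]
      rw [show |(2:ℝ)| = 2 by norm_num]
      linarith
    have ht2 : t ≤ t^2 := by nlinarith
    calc |b| * t ≤ |b| * t^2 := by
          exact mul_le_mul_of_nonneg_left ht2 (abs_nonneg _)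
      _ = |b * t^2| := by rw [abs_mul, abs_of_nonneg (by nlinarith : (0:ℝ) ≤ t^2)]
      _ ≤ M := habs
  subst hb
  have hc : c = 0 := by
    refine lin_zero hM fun t ht => ?_
    have h1 := h t
    have h2 := h (2*t)
    have habs : |6 * (c * t^3)| ≤ 3*M := by
      have heq : 6*(c*t^3) = (a*(2*t) + 0*(2*t)^2 + c*(2*t)^3) - 2*(a*t + 0*t^2 + c*t^3) := by ring
      rw [heq]
      have h3 := abs_sub (a*(2*t) + 0*(2*t)^2 + c*(2*t)^3) (2*(a*t + 0*t^2 + c*t^3))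
      have h4 : |2*(a*t + 0*t^2 + c*t^3)| = 2 * |a*t + 0*t^2 + c*t^3| := by
        rw [abs_mul]; norm_num
      linarith
    have ht3 : t ≤ t^3 := by nlinarith
    have habs' : |c| * t^3 ≤ M/2 := by
      rw [abs_mul, show |(6:ℝ)| = 6 by norm_num] at habs
      rw [abs_mul, abs_of_nonneg (by nlinarith : (0:ℝ) ≤ t^3)] at habs
      linarith
    calc |c| * t ≤ |c| * t^3 := mul_le_mul_of_nonneg_left ht3 (abs_nonneg _)
      _ ≤ M/2 := habs'
      _ ≤ M := by linarith
  subst hc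
  refine ⟨lin_zero hM fun t ht => ?_, rfl, rfl⟩
  have h1 := h t
  have : |a * t| = |a| * t := by
    rw [abs_mul, abs_of_nonneg (by linarith : (0:ℝ) ≤ t)]
  calc |a| * t = |a*t| := this.symm
    _ = |a*t + 0*t^2 + 0*t^3| := by ring_nf
    _ ≤ M := h t

set_option maxHeartbeats 3000000 in
private theorem trilinear_core {V : Type*} [AddCommGroup V] [Module ℝ V]
    (B : V → V → V → ℝ) (ip : V → V → ℝ) (τ : ℝ) (hτ : 0 ≤ τ)
    (hB1 : ∀ (a b : ℝ) (x y z w : V), B (a•x + b•y) z w = a * B x z w + b * B y z w)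
    (hBs1 : ∀ x y z, B x y z = B y x z)
    (hBs2 : ∀ x y z, B x y z = B x z y)
    (hip1 : ∀ (a b : ℝ) (x y z : V), ip (a•x + b•y) z = a * ip x z + b * ip y z)
    (hips : ∀ x y, ip x y = ip y x)
    (hip0 : ∀ x, 0 ≤ ip x x)
    (hTd : ∀ u, |B u u u| ≤ τ * Real.sqrt (ip u u) ^ 3) :
    ∀ x y z, |B x y z| ≤ τ * Real.sqrt (ip x x) * Real.sqrt (ip y y) * Real.sqrt (ip z z) := by
  -- basic linearity helpers
  have ipal : ∀ (x y z : V), ip (x + y) z = ip x z + ip y z := by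
    intro x y z; have h := hip1 1 1 x y z; simpa using h
  have ipsl : ∀ (a : ℝ) (x y : V), ip (a • x) y = a * ip x y := by
    intro a x y; have h := hip1 a 0 x x y; simpa using h
  have ipar : ∀ (x y z : V), ip x (y + z) = ip x y + ip x z := by
    intro x y z; rw [hips, ipal, hips, hips z x]
  have ipsr : ∀ (a : ℝ) (x y : V), ip x (a • y) = a * ip x y := by
    intro a x y; rw [hips, ipsl, hips]
  have Bal : ∀ (x y z w : V), B (x + y) z w = B x z w + B y z w := by
    intro x y z w; have h := hB1 1 1 x y z w; simpa using h
  have Bsl : ∀ (a : ℝ) (x y z : V), B (a • x) y z = a * B x y z := by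
    intro a x y z; have h := hB1 a 0 x x y z; simpa using h
  have Bal2 : ∀ (x y z w : V), B x (y + z) w = B x y w + B x z w := by
    intro x y z w; rw [hBs1, Bal, hBs1, hBs1 z x]
  have Bsl2 : ∀ (a : ℝ) (x y z : V), B x (a • y) z = a * B x y z := by
    intro a x y z; rw [hBs1, Bsl, hBs1]
  have Bal3 : ∀ (x y z w : V), B x y (z + w) = B x y z + B x y w := by
    intro x y z w; rw [hBs2, Bal2, hBs2, hBs2 x w]
  have Bsl3 : ∀ (a : ℝ) (x y z : V), B x y (a • z) = a * B x y z := by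
    intro a x y z; rw [hBs2, Bsl2, hBs2]
  -- quadratic expansion
  have ipexp : ∀ (α β : ℝ) (x y : V),
      ip (α•x + β•y) (α•x + β•y)
        = α^2 * ip x x + 2*α*β * ip x y + β^2 * ip y y := by
    intro α β x y
    rw [hip1, ipar, ipar, ipsr, ipsr, ipsr, ipsr, hips y x]
    ring
  -- cubic expansion
  have Bexp : ∀ (α β : ℝ) (x y : V),
      B (α•x + β•y) (α•x + β•y) (α•x + β•y)
        = α^3 * B x x x + 3*α^2*β * B x x y + 3*α*β^2 * B x y y + β^3 * B y y y := by
    intro α β x y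
    rw [hB1, Bal2, Bal2, Bsl2, Bsl2, Bsl2, Bsl2,
        Bal3, Bal3, Bal3, Bal3, Bsl3, Bsl3, Bsl3, Bsl3, Bsl3, Bsl3, Bsl3, Bsl3,
        hBs2 y y x, hBs1 y x y, hBs1 y x x, hBs2 x y x]
    ring
  have N0 : ∀ u : V, 0 ≤ Real.sqrt (ip u u) := fun u => Real.sqrt_nonneg _
  have N2 : ∀ u : V, Real.sqrt (ip u u) ^ 2 = ip u u := fun u => Real.sq_sqrt (hip0 u)
  -- Cauchy–Schwarz
  have CS : ∀ x y : V, (ip x y)^2 ≤ ip x x * ip y y := by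
    intro x y
    have key : ∀ t : ℝ, 0 ≤ ip x x + 2*t*(ip x y) + t^2 * ip y y := by
      intro t
      have h := hip0 ((1:ℝ)•x + t•y)
      rw [ipexp] at h
      calc (0:ℝ) ≤ 1^2 * ip x x + 2*1*t * ip x y + t^2 * ip y y := h
        _ = ip x x + 2*t*(ip x y) + t^2 * ip y y := by ring
    by_cases hy : ip y y = 0
    · have hxy : ip x y = 0 := by
        by_contra hne
        have h := key (-(ip x x + 1)/(2 * ip x y))
        rw [hy] at h
        have h2 : (0:ℝ) ≤ ip x x + 2 * (-(ip x x + 1)/(2 * ip x y)) * ip x y := by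
          linarith [h]
        rw [show 2 * (-(ip x x + 1)/(2 * ip x y)) * ip x y = -(ip x x + 1) by
          field_simp] at h2
        linarith
      rw [hxy, hy]
      nlinarith [hip0 x]
    · have hy' : 0 < ip y y := lt_of_le_of_ne (hip0 y) (Ne.symm hy)
      have h := key (-(ip x y)/(ip y y))
      have h2 : 0 ≤ ip x x - (ip x y)^2 / ip y y := by
        have e : ip x x + 2*(-(ip x y)/(ip y y))*(ip x y) + (-(ip x y)/(ip y y))^2 * ip y y
            = ip x x - (ip x y)^2 / ip y y := by field_simp; ring
        rw [e] at h; exact h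
      have := mul_le_mul_of_nonneg_right (by linarith : (ip x y)^2 / ip y y ≤ ip x x) hy'.le
      rw [div_mul_cancel₀ _ hy] at this
      linarith [this]
  -- null directions kill B
  have null : ∀ x : V, ip x x = 0 → ∀ y z, B x y z = 0 := by
    intro x hx
    have hxu : ∀ u : V, ip x u = 0 := by
      intro u
      have h1 : (ip x u)^2 ≤ 0 := by
        have := CS x u; rw [hx, zero_mul] at this; exact this
      have h2 : (ip x u)^2 = 0 := le_antisymm h1 (sq_nonneg _)
      exact pow_eq_zero_iff (two_ne_zero) |>.mp h2
    have key : ∀ y : V, B y y x = 0 ∧ B y x x = 0 ∧ B x x x = 0 := by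
      intro y
      have hb : ∀ t : ℝ,
          |(3*B y y x)*t + (3*B y x x)*t^2 + (B x x x)*t^3|
            ≤ τ * Real.sqrt (ip y y)^3 + |B y y y| := by
        intro t
        have hq := hTd ((1:ℝ)•y + t•x)
        have hN : ip ((1:ℝ)•y + t•x) ((1:ℝ)•y + t•x) = ip y y := by
          rw [ipexp, hx, hips y x, hxu y]; ring
        rw [Bexp, hN] at hq
        have heq : (3*B y y x)*t + (3*B y x x)*t^2 + (B x x x)*t^3
            = (1^3 * B y y y + 3*1^2*t * B y y x + 3*1*t^2 * B y x x + t^3 * B x x x)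
              - B y y y := by ring
        rw [heq]
        calc |_ - B y y y| ≤ |_| + |B y y y| := abs_sub _ _
          _ ≤ τ * Real.sqrt (ip y y)^3 + |B y y y| := by linarith [hq]
      obtain ⟨h1, h2, h3⟩ := cubic_zero hb
      exact ⟨by linarith, by linarith, h3⟩
    intro y z
    have e2 : B (y+z) (y+z) x = B y y x + 2 * B y z x + B z z x := by
      rw [Bal, Bal2, Bal2, hBs1 z y x]; ring
    have h1 := (key (y+z)).1
    have h2 := (key y).1
    have h3 := (key z).1
    have hyz : B y z x = 0 := by rw [e2, h2, h3] at h1; linarith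
    rw [hBs1, hBs2]; exact hyz
  -- key estimate for unit vectors
  have unit : ∀ x y : V, ip x x = 1 → ip y y = 1 → |B x x y| ≤ τ := by
    intro x y hx hy
    have hs2 : (ip x y)^2 ≤ 1 := by have := CS x y; rw [hx, hy] at this; linarith
    set s := ip x y with hsdef
    have hsl : -1 ≤ s := by nlinarith
    have hsu : s ≤ 1 := by nlinarith
    set rv := (1:ℝ)•y + (-s)•x with hrv
    have hrx : ip x rv = 0 := by rw [hrv, ipar, ipsr, ipsr, hx, ← hsdef]; ring
    have hrr : ip rv rv = 1 - s^2 := by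
      rw [hrv, ipexp 1 (-s) y x, hy, hx, hips y x, ← hsdef]; ring
    by_cases hdeg : ip rv rv = 0
    · have hs1 : s^2 = 1 := by rw [hrr] at hdeg; linarith
      have hnull := null rv hdeg
      have hyd : y = s•x + rv := by rw [hrv, one_smul, neg_smul]; abel
      have hBxxy : B x x y = s * B x x x := by
        rw [hyd, Bal3, Bsl3]
        have hz : B x x rv = 0 := by rw [hBs2, hBs1]; exact hnull x x
        rw [hz, add_zero]
      rw [hBxxy, abs_mul]
      have hBx : |B x x x| ≤ τ := by
        have h := hTd x; rw [hx, Real.sqrt_one, one_pow, mul_one] at h; exact h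
      have habs : |s| = 1 := by nlinarith [sq_abs s, abs_nonneg s]
      rw [habs, one_mul]; exact hBx
    · have hrrpos : 0 < ip rv rv := lt_of_le_of_ne (hip0 _) (Ne.symm hdeg)
      set β := Real.sqrt (ip rv rv) with hβdef
      have hβpos : 0 < β := Real.sqrt_pos.mpr hrrpos
      have hβne : β ≠ 0 := hβpos.ne'
      have hβ2 : β^2 = 1 - s^2 := by rw [hβdef, Real.sq_sqrt (hip0 _), hrr]
      set e := β⁻¹ • rv with he
      have hee : ip e e = 1 := by
        rw [he, ipsl, ipsr, hrr, ← hβ2]; field_simp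
      have hxe : ip x e = 0 := by rw [he, ipsr, hrx, mul_zero]
      have hyd : y = s•x + β•e := by
        rw [he, smul_smul, mul_inv_cancel₀ hβne, one_smul, hrv, one_smul, neg_smul]; abel
      set φ := Real.arccos s with hφ
      have hcos : Real.cos φ = s := by rw [hφ]; exact Real.cos_arccos hsl hsu
      have hsin : Real.sin φ = β := by rw [hφ, Real.sin_arccos, hβdef, hrr]
      set c := Real.cos (φ/3) with hc
      set s' := Real.sin (φ/3) with hs'
      have hcs : s'^2 = 1 - c^2 := by
        have h := Real.sin_sq_add_cos_sq (φ/3); rw [← hc, ← hs'] at h; linarith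
      have h3c : 4*c^3 - 3*c = s := by
        have h := Real.cos_three_mul (φ/3)
        rw [show 3*(φ/3) = φ by ring, hcos, ← hc] at h; linarith
      have h3s : 3*s' - 4*s'^3 = β := by
        have h := Real.sin_three_mul (φ/3)
        rw [show 3*(φ/3) = φ by ring, hsin, ← hs'] at h; linarith
      set r3 := Real.sqrt 3 with hr3
      have hr2 : r3^2 = 3 := Real.sq_sqrt (by norm_num)
      have keyj : ∀ cj sj : ℝ, cj^2 + sj^2 = 1 →
          |cj^3 * B x x x + 3*cj^2*sj * B x x e + 3*cj*sj^2 * B x e e + sj^3 * B e e e| ≤ τ := by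
        intro cj sj hcj
        have hipu : ip (cj•x + sj•e) (cj•x + sj•e) = 1 := by
          rw [ipexp, hx, hee, hxe]; linear_combination hcj
        have h := hTd (cj•x + sj•e)
        rw [Bexp, hipu, Real.sqrt_one, one_pow, mul_one] at h
        exact h
      have hA0 := keyj c s' (by linarith)
      have hA1 := keyj ((-c - r3*s')/2) ((r3*c - s')/2)
        (by linear_combination ((1 + r3^2)/4) * hcs + (1/4 : ℝ) * hr2)
      have hA2 := keyj ((r3*s' - c)/2) ((-s' - r3*c)/2)
        (by linear_combination ((1 + r3^2)/4) * hcs + (1/4 : ℝ) * hr2)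
      have hI2 : ((4*c^2 - 1)/3)^2*c^3 + ((4*((-c - r3*s')/2)^2 - 1)/3)^2*((-c - r3*s')/2)^3 + ((4*((r3*s' - c)/2)^2 - 1)/3)^2*((r3*s' - c)/2)^3 = 4*c^3 - 3*c := by
        linear_combination ((-3 : ℝ)*c + (-11/4 : ℝ)*c*s'^2 + (-21/4 : ℝ)*c*s'^4 + (11/12 : ℝ)*c^3 + (-7/2 : ℝ)*c^3*s'^2 + (7/4 : ℝ)*c^5) * hcs + ((-1/12 : ℝ)*c*s'^2 + (5/6 : ℝ)*c*s'^4 + (5/18 : ℝ)*c*s'^4*r3^2 + (-7/4 : ℝ)*c*s'^6 + (-7/12 : ℝ)*c*s'^6*r3^2 + (-7/36 : ℝ)*c*s'^6*r3^4 + (5/9 : ℝ)*c^3*s'^2 + (-35/12 : ℝ)*c^3*s'^4 + (-35/36 : ℝ)*c^3*s'^4*r3^2 + (-7/12 : ℝ)*c^5*s'^2) * hr2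
      have hI3 : ((4*c^2 - 1)/3)^2*c^2*s' + ((4*((-c - r3*s')/2)^2 - 1)/3)^2*((-c - r3*s')/2)^2*((r3*c - s')/2) + ((4*((r3*s' - c)/2)^2 - 1)/3)^2*((r3*s' - c)/2)^2*((-s' - r3*c)/2) = s' - (4/3) * s'^3 := by
        linear_combination ((1 : ℝ)*s' + (-1/4 : ℝ)*s'^3 + (-3/4 : ℝ)*s'^5 + (3/4 : ℝ)*c^2*s' + (3/2 : ℝ)*c^2*s'^3 + (9/4 : ℝ)*c^4*s') * hcs + ((-1/36 : ℝ)*s'^3 + (1/6 : ℝ)*s'^5 + (1/18 : ℝ)*s'^5*r3^2 + (-1/4 : ℝ)*s'^7 + (-1/12 : ℝ)*s'^7*r3^2 + (-1/36 : ℝ)*s'^7*r3^4 + (1/18 : ℝ)*c^2*s' + (-1/3 : ℝ)*c^2*s'^3 + (-2/9 : ℝ)*c^2*s'^3*r3^2 + (1/4 : ℝ)*c^2*s'^5 + (1/12 : ℝ)*c^2*s'^5*r3^2 + (1/6 : ℝ)*c^2*s'^5*r3^4 + (-2/9 : ℝ)*c^4*s' + (5/4 : ℝ)*c^4*s'^3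 + (5/9 : ℝ)*c^4*s'^3*r3^2 + (1/6 : ℝ)*c^6*s') * hr2
      have hI4 : ((4*c^2 - 1)/3)^2*c*s'^2 + ((4*((-c - r3*s')/2)^2 - 1)/3)^2*((-c - r3*s')/2)*((r3*c - s')/2)^2 + ((4*((r3*s' - c)/2)^2 - 1)/3)^2*((r3*s' - c)/2)*((-s' - r3*c)/2)^2 = 0 := by
        linear_combination ((-1/4 : ℝ)*c*s'^2 + (1/4 : ℝ)*c*s'^4 + (1/12 : ℝ)*c^3 + (1/6 : ℝ)*c^3*s'^2 + (-1/12 : ℝ)*c^5) * hcs + ((1/18 : ℝ)*c*s'^2 + (-1/6 : ℝ)*c*s'^4 + (-1/9 : ℝ)*c*s'^4*r3^2 + (1/12 : ℝ)*c*s'^6 + (1/36 : ℝ)*c*s'^6*r3^2 + (1/18 : ℝ)*c*s'^6*r3^4 + (-1/36 : ℝ)*c^3 + (1/6 : ℝ)*c^3*s'^2 + (1/6 : ℝ)*c^3*s'^2*r3^2 + (5/36 : ℝ)*c^3*s'^4 + (5/36 : ℝ)*c^3*s'^4*r3^2 + (-5/36 : ℝ)*c^3*s'^4*r3^4 + (1/18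 : ℝ)*c^5 + (-5/9 : ℝ)*c^5*s'^2 + (-5/18 : ℝ)*c^5*s'^2*r3^2 + (-1/36 : ℝ)*c^7) * hr2
      have hI5 : ((4*c^2 - 1)/3)^2*s'^3 + ((4*((-c - r3*s')/2)^2 - 1)/3)^2*((r3*c - s')/2)^3 + ((4*((r3*s' - c)/2)^2 - 1)/3)^2*((-s' - r3*c)/2)^3 = 0 := by
        linear_combination ((-1/12 : ℝ)*s'^3 + (-1/4 : ℝ)*s'^5 + (1/4 : ℝ)*c^2*s' + (1/2 : ℝ)*c^2*s'^3 + (3/4 : ℝ)*c^4*s') * hcs + ((1/18 : ℝ)*s'^5 + (-1/12 : ℝ)*s'^7 + (-1/36 : ℝ)*s'^7*r3^2 + (-1/12 : ℝ)*c^2*s' + (1/6 : ℝ)*c^2*s'^3 + (1/6 : ℝ)*c^2*s'^3*r3^2 + (1/12 : ℝ)*c^2*s'^5 + (1/12 : ℝ)*c^2*s'^5*r3^2 + (-1/12 : ℝ)*c^2*s'^5*r3^4 + (-1/6 : ℝ)*c^4*s' + (-1/9 : ℝ)*c^4*s'*r3^2 + (-1/6 : ℝ)*c^4*s'^3 + (-1/6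 : ℝ)*c^4*s'^3*r3^2 + (1/9 : ℝ)*c^4*s'^3*r3^4 + (1/4 : ℝ)*c^6*s' + (1/9 : ℝ)*c^6*s'*r3^2) * hr2
      have hG1 : ((4*c^2 - 1)/3)^2 + ((4*((-c - r3*s')/2)^2 - 1)/3)^2 + ((4*((r3*s' - c)/2)^2 - 1)/3)^2 = 1 := by
        linear_combination ((2/3 : ℝ) + (2 : ℝ)*s'^2 + (2 : ℝ)*c^2) * hcs + ((-4/9 : ℝ)*s'^2 + (2/3 : ℝ)*s'^4 + (2/9 : ℝ)*s'^4*r3^2 + (4/3 : ℝ)*c^2*s'^2) * hr2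
      have hgrand : ((4*c^2 - 1)/3)^2 * (c^3 * B x x x + 3*c^2*s' * B x x e + 3*c*s'^2 * B x e e + s'^3 * B e e e) + ((4*((-c - r3*s')/2)^2 - 1)/3)^2 * (((-c - r3*s')/2)^3 * B x x x + 3*((-c - r3*s')/2)^2*((r3*c - s')/2) * B x x e + 3*((-c - r3*s')/2)*((r3*c - s')/2)^2 * B x e e + ((r3*c - s')/2)^3 * B e e e) + ((4*((r3*s' - c)/2)^2 - 1)/3)^2 * (((r3*s' - c)/2)^3 * B x x x + 3*((r3*s' - c)/2)^2*((-s' - r3*c)/2) * B x x e + 3*((r3*s' - c)/2)*((-s' - r3*c)/2)^2 * B x e e + ((-s' - r3*c)/2)^3 * B e e e)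
          = (4*c^3 - 3*c) * B x x x + (3*s' - 4*s'^3) * B x x e := by
        linear_combination (B x x x) * hI2 + (3 * B x x e) * hI3 + (3 * B x e e) * hI4 + (B e e e) * hI5
      have hBxxy : B x x y = s * B x x x + β * B x x e := by
        rw [hyd, Bal3, Bsl3, Bsl3]
      have hfin : B x x y = ((4*c^2 - 1)/3)^2 * (c^3 * B x x x + 3*c^2*s' * B x x e + 3*c*s'^2 * B x e e + s'^3 * B e e e) + ((4*((-c - r3*s')/2)^2 - 1)/3)^2 * (((-c - r3*s')/2)^3 * B x x x + 3*((-c - r3*s')/2)^2*((r3*c - s')/2) * B x x e + 3*((-c - r3*s')/2)*((r3*c - s')/2)^2 * B x e e + ((r3*c - s')/2)^3 * B e e e) + ((4*((r3*s' - c)/2)^2 - 1)/3)^2 * (((r3*s' - c)/2)^3 * B x x x + 3*((r3*s' - c)/2)^2*((-s' - r3*c)/2) * B x x e + 3*((r3*s' - c)/2)*((-s' - r3*c)/2)^2 * B x e e + ((-s' - r3*c)/2)^3 * B e e e) := by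
        rw [hBxxy, ← h3c, ← h3s, hgrand]
      have hw0 : (0:ℝ) ≤ ((4*c^2 - 1)/3)^2 := sq_nonneg _
      have hw1 : (0:ℝ) ≤ ((4*((-c - r3*s')/2)^2 - 1)/3)^2 := sq_nonneg _
      have hw2 : (0:ℝ) ≤ ((4*((r3*s' - c)/2)^2 - 1)/3)^2 := sq_nonneg _
      have b0 : |((4*c^2 - 1)/3)^2 * (c^3 * B x x x + 3*c^2*s' * B x x e + 3*c*s'^2 * B x e e + s'^3 * B e e e)| ≤ ((4*c^2 - 1)/3)^2 * τ := by
        rw [abs_mul, abs_of_nonneg hw0]; exact mul_le_mul_of_nonneg_left hA0 hw0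
      have b1 : |((4*((-c - r3*s')/2)^2 - 1)/3)^2 * (((-c - r3*s')/2)^3 * B x x x + 3*((-c - r3*s')/2)^2*((r3*c - s')/2) * B x x e + 3*((-c - r3*s')/2)*((r3*c - s')/2)^2 * B x e e + ((r3*c - s')/2)^3 * B e e e)| ≤ ((4*((-c - r3*s')/2)^2 - 1)/3)^2 * τ := by
        rw [abs_mul, abs_of_nonneg hw1]; exact mul_le_mul_of_nonneg_left hA1 hw1
      have b2 : |((4*((r3*s' - c)/2)^2 - 1)/3)^2 * (((r3*s' - c)/2)^3 * B x x x + 3*((r3*s' - c)/2)^2*((-s' - r3*c)/2) * B x x e + 3*((r3*s' - c)/2)*((-s' - r3*c)/2)^2 * B x e e + ((-s' - r3*c)/2)^3 * B e e e)| ≤ ((4*((r3*s' - c)/2)^2 - 1)/3)^2 * τ := by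
        rw [abs_mul, abs_of_nonneg hw2]; exact mul_le_mul_of_nonneg_left hA2 hw2
      have tri : |((4*c^2 - 1)/3)^2 * (c^3 * B x x x + 3*c^2*s' * B x x e + 3*c*s'^2 * B x e e + s'^3 * B e e e) + ((4*((-c - r3*s')/2)^2 - 1)/3)^2 * (((-c - r3*s')/2)^3 * B x x x + 3*((-c - r3*s')/2)^2*((r3*c - s')/2) * B x x e + 3*((-c - r3*s')/2)*((r3*c - s')/2)^2 * B x e e + ((r3*c - s')/2)^3 * B e e e) + ((4*((r3*s' - c)/2)^2 - 1)/3)^2 * (((r3*s' - c)/2)^3 * B x x x + 3*((r3*s' - c)/2)^2*((-s' - r3*c)/2) * B x x e + 3*((r3*s' - c)/2)*((-s' - r3*c)/2)^2 * B x e e + ((-s' - r3*c)/2)^3 * B e e e)| ≤ |((4*c^2 - 1)/3)^2 * (c^3 * B x x x + 3*c^2*s' * B x x e + 3*c*s'^2 * B x e e + s'^3 * B e e e)| + |((4*((-c - r3*s')/2)^2 - 1)/3)^2 * (((-c - r3*s')/2)^3 * B x x x + 3*((-c - r3*s')/2)^2*((r3*c - s')/2) * B x x e + 3*((-c - r3*s')/2)*((r3*c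 - s')/2)^2 * B x e e + ((r3*c - s')/2)^3 * B e e e)| + |((4*((r3*s' - c)/2)^2 - 1)/3)^2 * (((r3*s' - c)/2)^3 * B x x x + 3*((r3*s' - c)/2)^2*((-s' - r3*c)/2) * B x x e + 3*((r3*s' - c)/2)*((-s' - r3*c)/2)^2 * B x e e + ((-s' - r3*c)/2)^3 * B e e e)| := by
        calc |((4*c^2 - 1)/3)^2 * (c^3 * B x x x + 3*c^2*s' * B x x e + 3*c*s'^2 * B x e e + s'^3 * B e e e) + ((4*((-c - r3*s')/2)^2 - 1)/3)^2 * (((-c - r3*s')/2)^3 * B x x x + 3*((-c - r3*s')/2)^2*((r3*c - s')/2) * B x x e + 3*((-c - r3*s')/2)*((r3*c - s')/2)^2 * B x e e + ((r3*c - s')/2)^3 * B e e e) + ((4*((r3*s' - c)/2)^2 - 1)/3)^2 * (((r3*s' - c)/2)^3 * B x x x + 3*((r3*s' - c)/2)^2*((-s' - r3*c)/2) * B x x e + 3*((r3*s' - c)/2)*((-s' - r3*c)/2)^2 * B x e e + ((-s' - r3*c)/2)^3 * B e e e)| ≤ |((4*c^2 - 1)/3)^2 * (c^3 * B x x x + 3*c^2*s'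 * B x x e + 3*c*s'^2 * B x e e + s'^3 * B e e e) + ((4*((-c - r3*s')/2)^2 - 1)/3)^2 * (((-c - r3*s')/2)^3 * B x x x + 3*((-c - r3*s')/2)^2*((r3*c - s')/2) * B x x e + 3*((-c - r3*s')/2)*((r3*c - s')/2)^2 * B x e e + ((r3*c - s')/2)^3 * B e e e)| + |((4*((r3*s' - c)/2)^2 - 1)/3)^2 * (((r3*s' - c)/2)^3 * B x x x + 3*((r3*s' - c)/2)^2*((-s' - r3*c)/2) * B x x e + 3*((r3*s' - c)/2)*((-s' - r3*c)/2)^2 * B x e e + ((-s' - r3*c)/2)^3 * B e e e)| := abs_add_le _ _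
          _ ≤ |((4*c^2 - 1)/3)^2 * (c^3 * B x x x + 3*c^2*s' * B x x e + 3*c*s'^2 * B x e e + s'^3 * B e e e)| + |((4*((-c - r3*s')/2)^2 - 1)/3)^2 * (((-c - r3*s')/2)^3 * B x x x + 3*((-c - r3*s')/2)^2*((r3*c - s')/2) * B x x e + 3*((-c - r3*s')/2)*((r3*c - s')/2)^2 * B x e e + ((r3*c - s')/2)^3 * B e e e)| + |((4*((r3*s' - c)/2)^2 - 1)/3)^2 * (((r3*s' - c)/2)^3 * B x x x + 3*((r3*s' - c)/2)^2*((-s' - r3*c)/2) * B x x e + 3*((r3*s' - c)/2)*((-s' - r3*c)/2)^2 * B x e e + ((-s' - r3*c)/2)^3 * B e e e)| := by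
              linarith [abs_add_le (((4*c^2 - 1)/3)^2 * (c^3 * B x x x + 3*c^2*s' * B x x e + 3*c*s'^2 * B x e e + s'^3 * B e e e)) (((4*((-c - r3*s')/2)^2 - 1)/3)^2 * (((-c - r3*s')/2)^3 * B x x x + 3*((-c - r3*s')/2)^2*((r3*c - s')/2) * B x x e + 3*((-c - r3*s')/2)*((r3*c - s')/2)^2 * B x e e + ((r3*c - s')/2)^3 * B e e e))]
      have : |B x x y| ≤ ((4*c^2 - 1)/3)^2 * τ + ((4*((-c - r3*s')/2)^2 - 1)/3)^2 * τ + ((4*((r3*s' - c)/2)^2 - 1)/3)^2 * τ := by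
        rw [hfin]; linarith
      have hsum : ((4*c^2 - 1)/3)^2 * τ + ((4*((-c - r3*s')/2)^2 - 1)/3)^2 * τ + ((4*((r3*s' - c)/2)^2 - 1)/3)^2 * τ = τ := by linear_combination τ * hG1
      linarith
  -- two equal arguments, general vectors
  have claimA : ∀ x y : V, |B x x y| ≤ τ * ip x x * Real.sqrt (ip y y) := by
    intro x y
    by_cases hx0 : ip x x = 0
    · rw [null x hx0 x y, abs_zero, hx0, mul_zero, zero_mul]
    · by_cases hy0 : ip y y = 0
      · have h0 : B y x x = 0 := null y hy0 x x
        have hB0 : B x x y = 0 := by rw [hBs2, hBs1]; exact h0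
        rw [hB0, abs_zero, hy0, Real.sqrt_zero, mul_zero]
      · have hxpos : 0 < ip x x := lt_of_le_of_ne (hip0 x) (Ne.symm hx0)
        have hypos : 0 < ip y y := lt_of_le_of_ne (hip0 y) (Ne.symm hy0)
        have hNxpos : 0 < Real.sqrt (ip x x) := Real.sqrt_pos.mpr hxpos
        have hNypos : 0 < Real.sqrt (ip y y) := Real.sqrt_pos.mpr hypos
        have hNx : Real.sqrt (ip x x) * Real.sqrt (ip x x) = ip x x := Real.mul_self_sqrt (hip0 x)
        have hNy : Real.sqrt (ip y y) * Real.sqrt (ip y y) = ip y y := Real.mul_self_sqrt (hip0 y)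
        have hx1 : ip ((Real.sqrt (ip x x))⁻¹ • x) ((Real.sqrt (ip x x))⁻¹ • x) = 1 := by
          rw [ipsl, ipsr]
          field_simp
          exact (N2 x).symm
        have hy1 : ip ((Real.sqrt (ip y y))⁻¹ • y) ((Real.sqrt (ip y y))⁻¹ • y) = 1 := by
          rw [ipsl, ipsr]
          field_simp
          exact (N2 y).symm
        have hxne : Real.sqrt (ip x x) ≠ 0 := ne_of_gt hNxpos
        have hyne : Real.sqrt (ip y y) ≠ 0 := ne_of_gt hNypos
        have h := unit _ _ hx1 hy1
        have heq : B ((Real.sqrt (ip x x))⁻¹ • x) ((Real.sqrt (ip x x))⁻¹ • x) ((Real.sqrt (ip y y))⁻¹ • y)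
            = (Real.sqrt (ip x x))⁻¹ * ((Real.sqrt (ip x x))⁻¹ * ((Real.sqrt (ip y y))⁻¹ * B x x y)) := by
          rw [Bsl, Bsl2, Bsl3]
        rw [heq, abs_mul, abs_mul, abs_mul,
          abs_of_pos (inv_pos.mpr hNxpos), abs_of_pos (inv_pos.mpr hNypos)] at h
        have h2 : |B x x y| ≤ Real.sqrt (ip x x) * Real.sqrt (ip x x) * Real.sqrt (ip y y) * τ := by
          rw [← mul_le_mul_iff_right₀ (by positivity :
            (0:ℝ) < (Real.sqrt (ip x x))⁻¹ * ((Real.sqrt (ip x x))⁻¹ * (Real.sqrt (ip y y))⁻¹))]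
          calc (Real.sqrt (ip x x))⁻¹ * ((Real.sqrt (ip x x))⁻¹ * (Real.sqrt (ip y y))⁻¹) * |B x x y|
              = (Real.sqrt (ip x x))⁻¹ * ((Real.sqrt (ip x x))⁻¹ * ((Real.sqrt (ip y y))⁻¹ * |B x x y|)) := by ring
            _ ≤ τ := h
            _ = (Real.sqrt (ip x x))⁻¹ * ((Real.sqrt (ip x x))⁻¹ * (Real.sqrt (ip y y))⁻¹) * (Real.sqrt (ip x x) * Real.sqrt (ip x x) * Real.sqrt (ip y y) * τ) := by
                field_simp
          
        calc |B x x y| ≤ Real.sqrt (ip x x) * Real.sqrt (ip x x) * Real.sqrt (ip y y) * τ := h2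
          _ = τ * ip x x * Real.sqrt (ip y y) := by rw [hNx]; ring
  -- expansion with two equal arguments
  have Bexp2 : ∀ (α β : ℝ) (u v w : V),
      B (α•u + β•v) (α•u + β•v) w
        = α^2 * B u u w + 2*α*β * B u v w + β^2 * B v v w := by
    intro α β u v w
    rw [hB1, Bal2, Bal2, Bsl2, Bsl2, Bsl2, Bsl2, hBs1 v u w]
    ring
  -- final polarization
  intro x y z
  by_cases hx0 : ip x x = 0
  · rw [null x hx0 y z, abs_zero]
    exact mul_nonneg (mul_nonneg (mul_nonneg hτ (N0 x)) (N0 y)) (N0 z)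
  by_cases hy0 : ip y y = 0
  · have h0 : B y x z = 0 := null y hy0 x z
    rw [hBs1 x y z, h0, abs_zero]
    exact mul_nonneg (mul_nonneg (mul_nonneg hτ (N0 x)) (N0 y)) (N0 z)
  by_cases hz0 : ip z z = 0
  · have h0 : B z x y = 0 := null z hz0 x y
    have hB0 : B x y z = 0 := by rw [hBs2 x y z, hBs1 x z y]; exact h0
    rw [hB0, abs_zero]
    exact mul_nonneg (mul_nonneg (mul_nonneg hτ (N0 x)) (N0 y)) (N0 z)
  have hxpos : 0 < ip x x := lt_of_le_of_ne (hip0 x) (Ne.symm hx0)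
  have hypos : 0 < ip y y := lt_of_le_of_ne (hip0 y) (Ne.symm hy0)
  have hApos : 0 < Real.sqrt (ip x x) := Real.sqrt_pos.mpr hxpos
  have hBpos : 0 < Real.sqrt (ip y y) := Real.sqrt_pos.mpr hypos
  have hCnn : 0 ≤ Real.sqrt (ip z z) := Real.sqrt_nonneg _
  have hA2 : (Real.sqrt (ip x x))^2 = ip x x := Real.sq_sqrt (hip0 x)
  have hB2 : (Real.sqrt (ip y y))^2 = ip y y := Real.sq_sqrt (hip0 y)
  have h1 := claimA ((Real.sqrt (ip y y))•x + (Real.sqrt (ip x x))•y) z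
  rw [Bexp2, ipexp] at h1
  have h2 := claimA ((Real.sqrt (ip y y))•x + (-(Real.sqrt (ip x x)))•y) z
  rw [Bexp2, ipexp] at h2
  have hfinal : 4*(Real.sqrt (ip y y))*(Real.sqrt (ip x x))*|B x y z|
      ≤ τ * ((Real.sqrt (ip y y))^2 * ip x x + 2*(Real.sqrt (ip y y))*(Real.sqrt (ip x x)) * ip x y + (Real.sqrt (ip x x))^2 * ip y y) * Real.sqrt (ip z z)
        + τ * ((Real.sqrt (ip y y))^2 * ip x x + 2*(Real.sqrt (ip y y))*(-(Real.sqrt (ip x x))) * ip x y + (-(Real.sqrt (ip x x)))^2 * ip y y) * Real.sqrt (ip z z) := by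
    have hd : ((Real.sqrt (ip y y))^2 * B x x z + 2*(Real.sqrt (ip y y))*(Real.sqrt (ip x x)) * B x y z + (Real.sqrt (ip x x))^2 * B y y z)
        - ((Real.sqrt (ip y y))^2 * B x x z + 2*(Real.sqrt (ip y y))*(-(Real.sqrt (ip x x))) * B x y z + (-(Real.sqrt (ip x x)))^2 * B y y z)
        = 4*(Real.sqrt (ip y y))*(Real.sqrt (ip x x)) * B x y z := by ring
    have habs : |4*(Real.sqrt (ip y y))*(Real.sqrt (ip x x)) * B x y z|
        ≤ |(Real.sqrt (ip y y))^2 * B x x z + 2*(Real.sqrt (ip y y))*(Real.sqrt (ip x x)) * B x y z + (Real.sqrt (ip x x))^2 * B y y z|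
          + |(Real.sqrt (ip y y))^2 * B x x z + 2*(Real.sqrt (ip y y))*(-(Real.sqrt (ip x x))) * B x y z + (-(Real.sqrt (ip x x)))^2 * B y y z| := by
      rw [← hd]; exact abs_sub _ _
    have habs2 : 4*(Real.sqrt (ip y y))*(Real.sqrt (ip x x))*|B x y z| = |4*(Real.sqrt (ip y y))*(Real.sqrt (ip x x)) * B x y z| := by
      rw [abs_mul, abs_of_pos (by positivity : (0:ℝ) < 4*(Real.sqrt (ip y y))*(Real.sqrt (ip x x)))]
    rw [habs2]
    exact le_trans habs (add_le_add h1 h2)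
  have hsum : τ * ((Real.sqrt (ip y y))^2 * ip x x + 2*(Real.sqrt (ip y y))*(Real.sqrt (ip x x)) * ip x y + (Real.sqrt (ip x x))^2 * ip y y) * Real.sqrt (ip z z)
        + τ * ((Real.sqrt (ip y y))^2 * ip x x + 2*(Real.sqrt (ip y y))*(-(Real.sqrt (ip x x))) * ip x y + (-(Real.sqrt (ip x x)))^2 * ip y y) * Real.sqrt (ip z z)
      = 4*(Real.sqrt (ip y y))*(Real.sqrt (ip x x)) * (τ * Real.sqrt (ip x x) * Real.sqrt (ip y y) * Real.sqrt (ip z z)) := by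
    linear_combination (-2 * τ * (Real.sqrt (ip z z)) * (Real.sqrt (ip y y))^2) * hA2 + (-2 * τ * (Real.sqrt (ip z z)) * (Real.sqrt (ip x x))^2) * hB2
  rw [hsum] at hfinal
  have h4 : (0:ℝ) < 4*(Real.sqrt (ip y y))*(Real.sqrt (ip x x)) := by positivity
  exact (mul_le_mul_iff_right₀ h4).mp hfinal

/-- If the symmetric 3-tensor `T` satisfies condition (Γ), i.e.
`|T(u)| ≤ τ ‖Γu‖³` for all `u` with `Γ` a symmetric `p×p` matrix and `τ > 0`, then
`|⟨T, u₁ ⊗ u₂ ⊗ u₃⟩| ≤ τ ‖Γu₁‖ ‖Γu₂‖ ‖Γu₃‖` for all `u₁, u₂, u₃`. -/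

theorem tensor_trilinear_bound_of_cubic_bound
    (p : ℕ) (T : Fin p → Fin p → Fin p → ℝ)
    (hsym : ∀ i j k, T i j k = T j i k ∧ T i j k = T i k j)
    (Γ : Matrix (Fin p) (Fin p) ℝ) (hΓ : Γ.IsSymm) (τ : ℝ) (hτ : 0 < τ)
    (hT : ∀ u : Fin p → ℝ,
      |∑ i, ∑ j, ∑ k, T i j k * u i * u j * u k| ≤ τ * euclNorm (Γ.mulVec u) ^ 3) :
    ∀ u₁ u₂ u₃ : Fin p → ℝ,
      |∑ i, ∑ j, ∑ k, T i j k * u₁ i * u₂ j * u₃ k|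
        ≤ τ * euclNorm (Γ.mulVec u₁) * euclNorm (Γ.mulVec u₂) * euclNorm (Γ.mulVec u₃) := by
  have hnorm : ∀ u : Fin p → ℝ,
      euclNorm (Γ.mulVec u) = Real.sqrt (∑ i, (Γ.mulVec u) i * (Γ.mulVec u) i) := by
    intro u
    unfold euclNorm
    congr 1
    exact Finset.sum_congr rfl fun i _ => pow_two _
  have hB1 : ∀ (a b : ℝ) (x y z w : Fin p → ℝ),
      (∑ i, ∑ j, ∑ k, T i j k * (a•x + b•y) i * z j * w k)
        = a * (∑ i, ∑ j, ∑ k, T i j k * x i * z j * w k)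
          + b * (∑ i, ∑ j, ∑ k, T i j k * y i * z j * w k) := by
    intro a b x y z w
    rw [Finset.mul_sum, Finset.mul_sum, ← Finset.sum_add_distrib]
    refine Finset.sum_congr rfl fun i _ => ?_
    rw [Finset.mul_sum, Finset.mul_sum, ← Finset.sum_add_distrib]
    refine Finset.sum_congr rfl fun j _ => ?_
    rw [Finset.mul_sum, Finset.mul_sum, ← Finset.sum_add_distrib]
    refine Finset.sum_congr rfl fun k _ => ?_
    simp only [Pi.add_apply, Pi.smul_apply, smul_eq_mul]
    ring
  have hBs1 : ∀ x y z : Fin p → ℝ,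
      (∑ i, ∑ j, ∑ k, T i j k * x i * y j * z k)
        = ∑ i, ∑ j, ∑ k, T i j k * y i * x j * z k := by
    intro x y z
    rw [Finset.sum_comm]
    refine Finset.sum_congr rfl fun i _ => Finset.sum_congr rfl fun j _ =>
      Finset.sum_congr rfl fun k _ => ?_
    rw [(hsym j i k).1]
    ring
  have hBs2 : ∀ x y z : Fin p → ℝ,
      (∑ i, ∑ j, ∑ k, T i j k * x i * y j * z k)
        = ∑ i, ∑ j, ∑ k, T i j k * x i * z j * y k := by
    intro x y z
    refine Finset.sum_congr rfl fun i _ => ?_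
    rw [Finset.sum_comm]
    refine Finset.sum_congr rfl fun j _ => Finset.sum_congr rfl fun k _ => ?_
    rw [(hsym i k j).2]
    ring
  have hip1 : ∀ (a b : ℝ) (x y z : Fin p → ℝ),
      (∑ i, (Γ.mulVec (a•x + b•y)) i * (Γ.mulVec z) i)
        = a * (∑ i, (Γ.mulVec x) i * (Γ.mulVec z) i)
          + b * (∑ i, (Γ.mulVec y) i * (Γ.mulVec z) i) := by
    intro a b x y z
    rw [Matrix.mulVec_add, Matrix.mulVec_smul, Matrix.mulVec_smul,
      Finset.mul_sum, Finset.mul_sum, ← Finset.sum_add_distrib]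
    refine Finset.sum_congr rfl fun i _ => ?_
    simp only [Pi.add_apply, Pi.smul_apply, smul_eq_mul]
    ring
  have hips : ∀ x y : Fin p → ℝ,
      (∑ i, (Γ.mulVec x) i * (Γ.mulVec y) i) = ∑ i, (Γ.mulVec y) i * (Γ.mulVec x) i :=
    fun x y => Finset.sum_congr rfl fun i _ => mul_comm _ _
  have hip0 : ∀ x : Fin p → ℝ, 0 ≤ ∑ i, (Γ.mulVec x) i * (Γ.mulVec x) i :=
    fun x => Finset.sum_nonneg fun i _ => mul_self_nonneg _
  have hTd : ∀ u : Fin p → ℝ,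
      |∑ i, ∑ j, ∑ k, T i j k * u i * u j * u k|
        ≤ τ * Real.sqrt (∑ i, (Γ.mulVec u) i * (Γ.mulVec u) i) ^ 3 := by
    intro u
    rw [← hnorm]
    exact hT u
  intro u₁ u₂ u₃
  have key := trilinear_core
    (fun u v w => ∑ i, ∑ j, ∑ k, T i j k * u i * v j * w k)
    (fun u v => ∑ i, (Γ.mulVec u) i * (Γ.mulVec v) i) τ hτ.le
    hB1 hBs1 hBs2 hip1 hips hip0 hTd u₁ u₂ u₃
  rw [hnorm u₁, hnorm u₂, hnorm u₃]
  exact key
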